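/- Let k be a field and let B be the ℕ×ℕ matrix over k with entries b_{n(n+1)/2 + i, (n-1)n/2 + i} = 1 for every n > 0 and 0 ≤ i < n, and b_{ij} = 0 otherwise. Then Bᵗ · B = I. -/

import Mathlib

open scoped Classical

/-- The matrix `B` over `k`: `b_{n(n+1)/2 + i, (n-1)n/2 + i} = 1` for `n > 0`, `0 ≤ i < n`,
and all other entries `0`. -/
noncomputable def matB (k : Type*) [Field k] : ℕ → ℕ → k := fun p q =>
  if ∃ n : ℕ, 0 < n ∧ ∃ i : ℕ, i < n ∧ p = n * (n + 1) / 2 + i ∧ q = (n - 1) * n / 2 + i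
  then 1 else 0

/-- The identity `ℕ×ℕ` matrix over `k`. -/
def idMat (k : Type*) [Field k] : ℕ → ℕ → k := fun i j => if i = j then 1 else 0

/-- Product of `ℕ×ℕ` matrices, defined entrywise by the (finite) sums `∑ l, M i l * N l j`. -/
noncomputable def matMul {k : Type*} [Field k] (M N : ℕ → ℕ → k) : ℕ → ℕ → k :=
  fun i j => ∑ᶠ l, M i l * N l j

/-- Transpose of an `ℕ×ℕ` matrix. -/
def matTranspose {k : Type*} [Field k] (M : ℕ → ℕ → k) : ℕ → ℕ → k := fun i j => M j i

/-- Triangular numbers. -/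
def Tri (m : ℕ) : ℕ := m * (m + 1) / 2

lemma Tri_succ (m : ℕ) : Tri (m + 1) = Tri m + m + 1 := by
  have h : (m + 1) * (m + 2) = m * (m + 1) + 2 * (m + 1) := by ring
  have ha : m * (m + 1) % 2 = 0 := Nat.even_iff.mp (Nat.even_mul_succ_self m)
  unfold Tri
  set a := m * (m + 1) with ha'
  set b := (m + 1) * (m + 2) with hb'
  clear_value a b
  omega

lemma Tri_mono : Monotone Tri :=
  monotone_nat_of_le_succ fun n => by rw [Tri_succ]; omega

lemma Tri_unique {m i m' i' : ℕ} (hi : i ≤ m) (hi' : i' ≤ m')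
    (h : Tri m + i = Tri m' + i') : m = m' ∧ i = i' := by
  rcases lt_trichotomy m m' with hm | hm | hm
  · have h1 : Tri m + i < Tri (m + 1) := by rw [Tri_succ]; omega
    have h2 : Tri (m + 1) ≤ Tri m' := Tri_mono (Nat.succ_le_of_lt hm)
    omega
  · subst hm; exact ⟨rfl, by omega⟩
  · have h1 : Tri m' + i' < Tri (m' + 1) := by rw [Tri_succ]; omega
    have h2 : Tri (m' + 1) ≤ Tri m := Tri_mono (Nat.succ_le_of_lt hm)
    omega

lemma exists_dec (q : ℕ) : ∃ m i, i ≤ m ∧ q = Tri m + i := by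
  induction q with
  | zero => exact ⟨0, 0, le_refl _, rfl⟩
  | succ q ih =>
    obtain ⟨m, i, hi, hq⟩ := ih
    rcases lt_or_eq_of_le hi with h | h
    · exact ⟨m, i + 1, h, by omega⟩
    · exact ⟨m + 1, 0, Nat.zero_le _, by rw [Tri_succ]; omega⟩

lemma matB_eq (k : Type*) [Field k] {m i : ℕ} (hi : i ≤ m) (p : ℕ) :
    matB k p (Tri m + i) = if p = Tri m + i + m + 1 then 1 else 0 := by
  unfold matB
  by_cases h : ∃ n : ℕ, 0 < n ∧ ∃ j : ℕ, j < n ∧ p = n * (n + 1) / 2 + j ∧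
      Tri m + i = (n - 1) * n / 2 + j
  · obtain ⟨n, hn, j, hj, hp, hq⟩ := h
    obtain ⟨m', rfl⟩ : ∃ m', n = m' + 1 := ⟨n - 1, by omega⟩
    have hq' : Tri m + i = Tri m' + j := by
      simpa [Tri] using hq
    obtain ⟨rfl, rfl⟩ := Tri_unique hi (by omega) hq'
    have hp' : p = Tri m + i + m + 1 := by
      have h2 : p = Tri (m + 1) + i := by simpa [Tri] using hp
      rw [Tri_succ] at h2; omega
    rw [if_pos ⟨m + 1, by omega, i, by omega, hp, hq⟩, if_pos hp']
  · rw [if_neg h, if_neg]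
    intro hp
    refine h ⟨m + 1, by omega, i, by omega, ?_, ?_⟩
    · show p = (m + 1) * (m + 2) / 2 + i
      have h2 : (m + 1) * (m + 2) / 2 = Tri (m + 1) := rfl
      rw [h2, Tri_succ]; omega
    · show Tri m + i = m * (m + 1) / 2 + i
      rfl

/-- `Bᵗ · B = I`. -/
theorem matB_transpose_mul_self (k : Type*) [Field k] :
    matMul (matTranspose (matB k)) (matB k) = idMat k := by
  funext p q
  obtain ⟨m, a, ham, rfl⟩ := exists_dec p
  obtain ⟨m', a', ham', rfl⟩ := exists_dec q
  unfold matMul matTranspose idMat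
  simp only [matB_eq k ham, matB_eq k ham']
  by_cases h : Tri m + a + m + 1 = Tri m' + a' + m' + 1
  · have hma : m = m' ∧ a = a' := by
      have := Tri_unique (m := m + 1) (m' := m' + 1) (i := a) (i' := a')
        (by omega) (by omega) (by rw [Tri_succ, Tri_succ]; omega)
      omega
    obtain ⟨rfl, rfl⟩ := hma
    rw [if_pos rfl]
    rw [finsum_eq_single _ (Tri m + a + m + 1) (fun x hx => by rw [if_neg hx, zero_mul])]
    simp
  · have hne : Tri m + a ≠ Tri m' + a' := by
      intro hc
      obtain ⟨rfl, rfl⟩ := Tri_unique ham ham' hc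
      exact h rfl
    rw [if_neg hne]
    have : ∀ l : ℕ, (if l = Tri m + a + m + 1 then (1:k) else 0) *
        (if l = Tri m' + a' + m' + 1 then 1 else 0) = 0 := by
      intro l
      by_cases h1 : l = Tri m + a + m + 1
      · subst h1; simp [h]; omega
      · simp [h1]
    rw [finsum_congr this, finsum_zero]
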